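/- Suppose s is a real polynomial of degree d with s(0) = 0 and 1−ε ≤ s(x) ≤ 1 for all integers x in [t, N], where 1 ≤ t < N. Assume the Coppersmith–Rivlin bound as a hypothesis (with constants a, b > 0). Then 1 ≤ ε·a·e^{b d²/(N−t) + 4d√(tN)/(N−t)}. -/

import Mathlib

open Polynomial Real Finset

lemma Tdeg' : ∀ n : ℕ, (Chebyshev.T ℝ n).natDegree ≤ n := by
  intro n
  induction n using Nat.twoStepInduction with
  | zero => simp [Chebyshev.T_zero]
  | one => simp [Chebyshev.T_one]
  | more n ih ih1 =>
    rw [show ((n + 2 : ℕ) : ℤ) = (n : ℤ) + 2 by push_cast; ring, Chebyshev.T_add_two]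
    refine le_trans (natDegree_sub_le _ _) ?_
    have h1 : (2 * X * Chebyshev.T ℝ (n + 1)).natDegree ≤ n + 2 := by
      refine le_trans (natDegree_mul_le) ?_
      have : (2 * X : ℝ[X]).natDegree ≤ 1 := by
        refine le_trans (natDegree_mul_le) ?_
        simp
      have h2 : (Chebyshev.T ℝ ((n:ℤ)+1)).natDegree ≤ n+1 := by
        rw [show ((n:ℤ)+1) = ((n+1:ℕ):ℤ) by push_cast; ring]; exact ih1
      omega
    have : (Chebyshev.T ℝ (n : ℤ)).natDegree ≤ n + 2 := le_trans ih (by omega)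
    omega

lemma Tneg' (x : ℝ) : ∀ n : ℕ, (Chebyshev.T ℝ n).eval (-x) = (-1)^n * (Chebyshev.T ℝ n).eval x := by
  intro n
  induction n using Nat.twoStepInduction with
  | zero => simp [Chebyshev.T_zero]
  | one => simp [Chebyshev.T_one]
  | more n ih ih1 =>
    rw [show ((n + 2 : ℕ) : ℤ) = (n : ℤ) + 2 by push_cast; ring, Chebyshev.T_add_two]
    push_cast at ih1 ⊢
    simp only [eval_sub, eval_mul, eval_ofNat, eval_X, ih, ih1]
    ring

lemma Tcosh' (x : ℝ) : ∀ n : ℕ, (Chebyshev.T ℝ n).eval (Real.cosh x) = Real.cosh (n * x) := by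
  intro n
  induction n using Nat.twoStepInduction with
  | zero => simp [Chebyshev.T_zero]
  | one => simp [Chebyshev.T_one]
  | more n ih ih1 =>
    rw [show ((n + 2 : ℕ) : ℤ) = (n : ℤ) + 2 by push_cast; ring, Chebyshev.T_add_two]
    push_cast at ih1 ⊢
    simp only [eval_sub, eval_mul, eval_ofNat, eval_X, ih, ih1]
    have e1 : ((n : ℝ) + 2) * x = ((n + 1) * x) + x := by ring
    have e2 : (n : ℝ) * x = ((n + 1) * x) - x := by ring
    rw [e1, e2, Real.cosh_add, Real.cosh_sub]
    ring

lemma theta_exists (tR NR : ℝ) (ht : 0 < tR) (htN : tR < NR) :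
    ∃ θ : ℝ, 0 ≤ θ ∧ Real.cosh θ = ((NR + tR)/2) * ((NR - tR)/2)⁻¹ ∧
      θ ≤ 4 * Real.sqrt (tR * NR) / (NR - tR) := by
  obtain ⟨sA, hsA⟩ : ∃ x, x = Real.sqrt NR := ⟨_, rfl⟩
  obtain ⟨sB, hsB⟩ : ∃ x, x = Real.sqrt tR := ⟨_, rfl⟩
  have hA2 : sA^2 = NR := by rw [hsA]; exact Real.sq_sqrt (le_of_lt (ht.trans htN))
  have hB2 : sB^2 = tR := by rw [hsB]; exact Real.sq_sqrt ht.le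
  have hBA : sB < sA := by rw [hsA, hsB]; exact Real.sqrt_lt_sqrt ht.le htN
  have hBpos : 0 < sB := by rw [hsB]; exact Real.sqrt_pos.mpr ht
  have hABne : sA - sB ≠ 0 := by linarith
  have hABne' : sA + sB ≠ 0 := by linarith
  set v0 := (sA + sB)/(sA - sB) with hv0
  have hv0pos : 0 < v0 := div_pos (by linarith) (by linarith)
  have hv01 : 1 ≤ v0 := by rw [le_div_iff₀ (by linarith)]; linarith
  refine ⟨Real.log v0, Real.log_nonneg hv01, ?_, ?_⟩
  · rw [Real.cosh_log hv0pos, hv0, ← hA2, ← hB2]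
    have h1 : sA^2 - sB^2 ≠ 0 := by nlinarith
    field_simp
    ring
  · have hlog : Real.log v0 ≤ v0 - 1 := Real.log_le_sub_one_of_pos hv0pos
    have hv0m1 : v0 - 1 = 2*sB/(sA - sB) := by
      rw [hv0]
      field_simp
      ring
    have hsqrtmul : Real.sqrt (tR * NR) = sB * sA := by
      rw [Real.sqrt_mul ht.le, hsA, hsB]
    have hd1 : (0:ℝ) < sA - sB := by linarith
    have hd2 : (0:ℝ) < sA^2 - sB^2 := by
      have h := mul_pos hd1 (show (0:ℝ) < sA + sB by linarith)
      calc (0:ℝ) < (sA - sB)*(sA + sB) := h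
        _ = sA^2 - sB^2 := by ring
    have hNt : NR - tR = sA^2 - sB^2 := by rw [hA2, hB2]
    have key : 2*sB/(sA - sB) ≤ 4 * (sB*sA) / (sA^2 - sB^2) := by
      rw [div_le_div_iff₀ hd1 hd2]
      nlinarith [mul_nonneg (mul_nonneg hBpos.le hd1.le) hd1.le]
    calc Real.log v0 ≤ v0 - 1 := hlog
      _ = 2*sB/(sA - sB) := hv0m1
      _ ≤ 4 * (sB*sA) / (sA^2 - sB^2) := key
      _ = 4 * Real.sqrt (tR * NR) / (NR - tR) := by rw [hsqrtmul, hNt]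

lemma cheb_extrap (d : ℕ) (hd : 1 ≤ d) (tR NR : ℝ) (ht : 0 < tR) (htN : tR < NR)
    (f : ℝ[X]) (hdegf : f.degree ≤ d) (M : ℝ)
    (hbound : ∀ x : ℝ, tR ≤ x → x ≤ NR → |f.eval x| ≤ M) :
    |f.eval 0| ≤ M * Real.exp (4 * d * Real.sqrt (tR * NR) / (NR - tR)) := by
  have hdpos : (0:ℝ) < d := by exact_mod_cast hd
  have hM : 0 ≤ M := le_trans (abs_nonneg _) (hbound tR le_rfl htN.le)
  set c : ℝ := (NR + tR)/2 with hc
  set r : ℝ := (NR - tR)/2 with hrdef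
  have hr : 0 < r := by rw [hrdef]; linarith
  set v : ℕ → ℝ := fun k => c + r * Real.cos (k * π / d) with hv
  set S : Finset ℕ := Finset.range (d+1) with hS
  have hcard : #S = d + 1 := Finset.card_range _
  have hangle : ∀ k ∈ S, (k * π / d) ∈ Set.Icc (0:ℝ) π := by
    intro k hk
    rw [hS, Finset.mem_range] at hk
    constructor
    · positivity
    · rw [div_le_iff₀ hdpos]
      have : (k:ℝ) ≤ d := by exact_mod_cast Nat.lt_succ_iff.mp hk
      nlinarith [Real.pi_pos]
  have hanglelt : ∀ i j : ℕ, i < j → (i * π / d) < (j * π / d) := by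
    intro i j hij
    have h1 : (i:ℝ) < j := by exact_mod_cast hij
    have := Real.pi_pos
    gcongr
  -- nodes are decreasing
  have hvlt : ∀ i ∈ S, ∀ j ∈ S, i < j → v j < v i := by
    intro i hi j hj hij
    have := Real.strictAntiOn_cos (hangle i hi) (hangle j hj) (hanglelt i j hij)
    simp only [hv]
    nlinarith
  have hinj : Set.InjOn v S := by
    intro i hi j hj hij
    have hi' : i ∈ S := hi
    have hj' : j ∈ S := hj
    rcases lt_trichotomy i j with h | h | h
    · exact absurd hij (ne_of_gt (hvlt i hi' j hj' h))
    · exact h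
    · exact absurd hij.symm (ne_of_gt (hvlt j hj' i hi' h))
  have hrange : ∀ k ∈ S, tR ≤ v k ∧ v k ≤ NR := by
    intro k hk
    have h1 := Real.neg_one_le_cos (k * π / d)
    have h2 := Real.cos_le_one (k * π / d)
    constructor
    · simp only [hv]; nlinarith
    · simp only [hv]; nlinarith
  set L : ℕ → ℝ := fun k => (Lagrange.basis S v k).eval 0 with hL
  have hdegf' : f.degree < (#S : WithBot ℕ) := by
    rw [hcard]
    exact lt_of_le_of_lt hdegf (by exact_mod_cast Nat.lt_succ_self d)
  -- Lagrange representation of f at 0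
  have hf0 : f.eval 0 = ∑ k ∈ S, f.eval (v k) * L k := by
    conv_lhs => rw [Lagrange.eq_interpolate hinj hdegf']
    simp [Lagrange.interpolate_apply, hL, eval_finset_sum]
  -- the comparison polynomial
  set Q : ℝ[X] := (Chebyshev.T ℝ d).comp ((X - C c) * C r⁻¹) with hQ
  have hQdeg : Q.degree < (#S : WithBot ℕ) := by
    rw [hcard]
    have h1 : Q.natDegree ≤ d := by
      refine le_trans (natDegree_comp_le) ?_
      have h2 : ((X - C c) * C r⁻¹).natDegree ≤ 1 := by
        refine le_trans (natDegree_mul_le) ?_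
        simp [natDegree_X_sub_C]
      have := Tdeg' d
      calc (Chebyshev.T ℝ d).natDegree * ((X - C c) * C r⁻¹).natDegree
          ≤ d * 1 := Nat.mul_le_mul this h2
        _ = d := by ring
    calc Q.degree ≤ (Q.natDegree : WithBot ℕ) := degree_le_natDegree
      _ ≤ (d : WithBot ℕ) := by exact_mod_cast h1
      _ < ((d+1 : ℕ) : WithBot ℕ) := by exact_mod_cast Nat.lt_succ_self d
  have hQeval : ∀ x : ℝ, Q.eval x = (Chebyshev.T ℝ d).eval ((x - c) * r⁻¹) := by
    intro x; simp [hQ, eval_comp]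
  have hQnode : ∀ k ∈ S, Q.eval (v k) = (-1)^k := by
    intro k hk
    rw [hQeval]
    have h1 : (v k - c) * r⁻¹ = Real.cos (k * π / d) := by
      field_simp [hv]
      simp only [hv]; ring
    rw [h1, Chebyshev.T_real_cos]
    have h2 : ((d:ℤ):ℝ) * (k * π / d) = k * π := by
      push_cast; field_simp
    rw [h2]
    have := Real.cos_nat_mul_pi_sub 0 k
    simpa using this
  have hQ0 : Q.eval 0 = ∑ k ∈ S, (-1)^k * L k := by
    conv_lhs => rw [Lagrange.eq_interpolate hinj hQdeg]
    rw [Lagrange.interpolate_apply]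
    rw [eval_finset_sum]
    refine Finset.sum_congr rfl ?_
    intro k hk
    rw [eval_mul, eval_C, hQnode k hk]
  -- sign of L k
  have hsign : ∀ k ∈ S, |L k| = (-1)^(d+k) * L k := by
    intro k hk
    have hkd : k ≤ d := by rw [hS, Finset.mem_range] at hk; omega
    set g : ℕ → ℝ := fun j => (v k - v j)⁻¹ * (0 - v j) with hg
    have hLk : L k = ∏ j ∈ S.erase k, g j := by
      rw [hL]
      simp only [Lagrange.basis, eval_prod]
      refine Finset.prod_congr rfl ?_
      intro j hj
      simp [Lagrange.basisDivisor, hg]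
    set A := (S.erase k).filter (fun j => j < k) with hA
    set B := (S.erase k).filter (fun j => ¬ j < k) with hB
    have hsplit : (∏ j ∈ A, g j) * (∏ j ∈ B, g j) = ∏ j ∈ S.erase k, g j :=
      Finset.prod_filter_mul_prod_filter_not _ _ _
    have hcardB : #B = d - k := by
      have : B = Finset.Ioc k d := by
        ext j
        simp only [hB, hS, Finset.mem_filter, Finset.mem_erase, Finset.mem_range, Finset.mem_Ioc]
        omega
      rw [this, Nat.card_Ioc]
    have hApos : ∀ j ∈ A, 0 < g j := by
      intro j hj
      rw [hA, Finset.mem_filter, Finset.mem_erase] at hj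
      have hjS : j ∈ S := hj.1.2
      have hlt : v k < v j := hvlt j hjS k hk hj.2
      have hpos : 0 < v j := lt_of_lt_of_le ht (hrange j hjS).1
      have h1 : (v k - v j)⁻¹ < 0 := inv_lt_zero.mpr (by linarith)
      show 0 < (v k - v j)⁻¹ * (0 - v j)
      exact mul_pos_of_neg_of_neg h1 (by linarith)
    have hBneg : ∀ j ∈ B, 0 < -(g j) := by
      intro j hj
      rw [hB, Finset.mem_filter, Finset.mem_erase] at hj
      have hjS : j ∈ S := hj.1.2
      have hkj : k < j := by omega
      have hlt : v j < v k := hvlt k hk j hjS hkj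
      have hpos : 0 < v j := lt_of_lt_of_le ht (hrange j hjS).1
      have h1 : 0 < (v k - v j)⁻¹ := inv_pos.mpr (by linarith)
      show 0 < -((v k - v j)⁻¹ * (0 - v j))
      have h2 : (v k - v j)⁻¹ * (0 - v j) < 0 := mul_neg_of_pos_of_neg h1 (by linarith)
      linarith
    have hBprod : ∏ j ∈ B, g j = (-1)^(#B) * ∏ j ∈ B, (-(g j)) := by
      rw [← Finset.prod_const (-1 : ℝ), ← Finset.prod_mul_distrib]
      exact Finset.prod_congr rfl (fun j _ => by ring)
    have hnn : 0 ≤ (∏ j ∈ A, g j) * ∏ j ∈ B, (-(g j)) :=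
      mul_nonneg (Finset.prod_nonneg (fun j hj => (hApos j hj).le))
        (Finset.prod_nonneg (fun j hj => (hBneg j hj).le))
    have hpow : ((-1:ℝ))^(d+k) * ((-1:ℝ))^(d-k) = 1 := by
      rw [← pow_add, show d+k+(d-k) = 2*d by omega, pow_mul]
      simp
    have hLk2 : L k = (-1:ℝ)^(d-k) * ((∏ j ∈ A, g j) * ∏ j ∈ B, (-(g j))) := by
      rw [hLk, ← hsplit, hBprod, hcardB]; ring
    have hposL : 0 ≤ (-1:ℝ)^(d+k) * L k := by
      rw [hLk2, ← mul_assoc, hpow, one_mul]; exact hnn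
    calc |L k| = |(-1:ℝ)^(d+k) * L k| := by
          rw [abs_mul, abs_pow, abs_neg, abs_one, one_pow, one_mul]
      _ = (-1:ℝ)^(d+k) * L k := abs_of_nonneg hposL
  -- sum of |L k| equals (-1)^d * Q(0)
  have hsum : ∑ k ∈ S, |L k| = (-1:ℝ)^d * Q.eval 0 := by
    rw [hQ0, Finset.mul_sum]
    refine Finset.sum_congr rfl ?_
    intro k hk
    rw [hsign k hk, pow_add]
    ring
  obtain ⟨θ, hθ0, hcoshθ, hθle⟩ := theta_exists tR NR ht htN
  have hcosh : Real.cosh θ = c * r⁻¹ := hcoshθ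
  have hQval : (-1:ℝ)^d * Q.eval 0 = Real.cosh (d * θ) := by
    rw [hQeval, show ((0:ℝ) - c) * r⁻¹ = -(c * r⁻¹) by ring, ← hcosh, Tneg' _ d, Tcosh']
    rw [← mul_assoc, ← pow_add, show d + d = 2*d by ring, pow_mul]
    simp
  have hcoshexp : Real.cosh ((d:ℝ) * θ) ≤ Real.exp ((d:ℝ) * θ) := by
    rw [Real.cosh_eq]
    have h1 : -((d:ℝ) * θ) ≤ (d:ℝ) * θ := neg_le_self (mul_nonneg (Nat.cast_nonneg d) hθ0)
    have h2 := Real.exp_le_exp.mpr h1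
    linarith
  have hθle' : (d:ℝ) * θ ≤ 4 * d * Real.sqrt (tR * NR) / (NR - tR) := by
    have := mul_le_mul_of_nonneg_left hθle (Nat.cast_nonneg d : (0:ℝ) ≤ d)
    calc (d:ℝ) * θ ≤ (d:ℝ) * (4 * Real.sqrt (tR * NR) / (NR - tR)) := this
      _ = 4 * d * Real.sqrt (tR * NR) / (NR - tR) := by ring
  have hsumle : ∑ k ∈ S, |L k| ≤ Real.exp (4 * d * Real.sqrt (tR * NR) / (NR - tR)) := by
    rw [hsum, hQval]
    exact hcoshexp.trans (Real.exp_le_exp.mpr hθle')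
  calc |f.eval 0| = |∑ k ∈ S, f.eval (v k) * L k| := by rw [hf0]
    _ ≤ ∑ k ∈ S, |f.eval (v k) * L k| := Finset.abs_sum_le_sum_abs _ _
    _ ≤ ∑ k ∈ S, M * |L k| := by
        refine Finset.sum_le_sum ?_
        intro k hk
        rw [abs_mul]
        exact mul_le_mul_of_nonneg_right (hbound _ (hrange k hk).1 (hrange k hk).2) (abs_nonneg _)
    _ = M * ∑ k ∈ S, |L k| := by rw [Finset.mul_sum]
    _ ≤ M * Real.exp (4 * d * Real.sqrt (tR * NR) / (NR - tR)) :=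
        mul_le_mul_of_nonneg_left hsumle hM

theorem quantum_search_error_lower_bound_t_solutions (N t d : ℕ)
    (ht : 1 ≤ t) (htN : t < N) (hd : 1 ≤ d)
    (ε : ℝ) (hε : 0 < ε) (s : Polynomial ℝ)
    (hdeg : s.degree ≤ d)
    (hs0 : s.eval 0 = 0)
    (hs : ∀ x : ℕ, t ≤ x → x ≤ N → 1 - ε ≤ s.eval (x : ℝ) ∧ s.eval (x : ℝ) ≤ 1)
    (a b : ℝ) (ha : 0 < a) (hb : 0 < b)
    (hCR : ∀ (p : Polynomial ℝ) (n : ℕ) (δ : ℝ), 0 < δ →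
      δ * (p.natDegree : ℝ) ^ 2 ≤ n →
      (∀ k : ℕ, k ≤ n → |p.eval (k : ℝ)| ≤ 1) →
      ∀ x : ℝ, 0 ≤ x → x ≤ n → |p.eval x| < a * Real.exp (b / δ)) :
    1 ≤ ε * a * Real.exp (b * d ^ 2 / (N - t) + 4 * d * Real.sqrt (t * N) / (N - t)) := by
  have htN' : (t:ℝ) < N := by exact_mod_cast htN
  have htpos : (0:ℝ) < t := by exact_mod_cast Nat.lt_of_lt_of_le Nat.zero_lt_one ht
  have hNt : (0:ℝ) < (N:ℝ) - t := by linarith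
  have hdpos : (0:ℝ) < d := by exact_mod_cast hd
  set n : ℕ := N - t with hn
  have hncast : ((n:ℕ):ℝ) = (N:ℝ) - t := by
    rw [hn]; push_cast [Nat.cast_sub htN.le]; ring
  set δ : ℝ := ((N:ℝ) - t) / (d:ℝ)^2 with hδdef
  have hδ : 0 < δ := div_pos hNt (by positivity)
  set p : ℝ[X] := C ε⁻¹ * (1 - s.comp (X + C (t:ℝ))) with hp
  have hsd : s.natDegree ≤ d := natDegree_le_iff_degree_le.mpr hdeg
  have hpd : p.natDegree ≤ d := by
    rw [hp]
    refine le_trans natDegree_mul_le ?_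
    rw [natDegree_C]
    simp only [Nat.zero_add]
    refine le_trans (natDegree_sub_le _ _) ?_
    rw [natDegree_one]
    refine max_le (by omega) ?_
    refine le_trans natDegree_comp_le ?_
    rw [natDegree_X_add_C]
    simpa using hsd
  have hδd : δ * ((p.natDegree:ℝ))^2 ≤ (n:ℝ) := by
    rw [hncast]
    have h0 : ((p.natDegree:ℝ)) ≤ d := by exact_mod_cast hpd
    have h1 : ((p.natDegree:ℝ))^2 ≤ ((d:ℝ))^2 := by
      nlinarith [(Nat.cast_nonneg p.natDegree : (0:ℝ) ≤ p.natDegree)]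
    calc δ * ((p.natDegree:ℝ))^2 ≤ δ * (d:ℝ)^2 := mul_le_mul_of_nonneg_left h1 hδ.le
      _ = (N:ℝ) - t := by rw [hδdef]; field_simp
  have hpk : ∀ k : ℕ, k ≤ n → |p.eval (k:ℝ)| ≤ 1 := by
    intro k hk
    have heval : p.eval (k:ℝ) = ε⁻¹ * (1 - s.eval ((k:ℝ) + t)) := by
      simp [hp, eval_comp]
    have hcast2 : ((k + t : ℕ):ℝ) = (k:ℝ) + t := by push_cast; ring
    obtain ⟨h1, h2⟩ := hs (k + t) (by omega) (by omega)
    rw [hcast2] at h1 h2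
    have h3 : 0 ≤ 1 - s.eval ((k:ℝ) + t) := by linarith
    have h4 : 1 - s.eval ((k:ℝ) + t) ≤ ε := by linarith
    rw [heval, abs_of_nonneg (mul_nonneg (inv_nonneg.mpr hε.le) h3)]
    calc ε⁻¹ * (1 - s.eval ((k:ℝ) + t)) ≤ ε⁻¹ * ε :=
        mul_le_mul_of_nonneg_left h4 (inv_nonneg.mpr hε.le)
      _ = 1 := inv_mul_cancel₀ hε.ne'
  have hCRres := hCR p n δ hδ hδd hpk
  set M : ℝ := ε * (a * Real.exp (b / δ)) with hMdef
  have hbound : ∀ z : ℝ, (t:ℝ) ≤ z → z ≤ (N:ℝ) → |(1 - s).eval z| ≤ M := by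
    intro z h1 h2
    have h3 := hCRres (z - t) (by linarith) (by rw [hncast]; linarith)
    have heval : p.eval (z - t) = ε⁻¹ * (1 - s.eval z) := by
      simp [hp, eval_comp, sub_add_cancel]
    have h4 : (1 - s).eval z = ε * p.eval (z - t) := by
      rw [heval, eval_sub, eval_one]
      field_simp
    rw [h4, abs_mul, abs_of_pos hε]
    calc ε * |p.eval (z - t)| ≤ ε * (a * Real.exp (b/δ)) :=
        mul_le_mul_of_nonneg_left h3.le hε.le
      _ = M := hMdef.symm
  have hdeg1 : (1 - s).degree ≤ (d : ℕ) := by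
    refine le_trans (degree_sub_le _ _) ?_
    rw [degree_one]
    refine max_le ?_ hdeg
    exact_mod_cast Nat.zero_le d
  have hext := cheb_extrap d hd (t:ℝ) (N:ℝ) htpos htN' (1 - s) hdeg1 M hbound
  have h10 : (1 - s).eval 0 = 1 := by simp [hs0]
  rw [h10, abs_one] at hext
  have hbδ : b / δ = b * d^2 / ((N:ℝ) - t) := by
    rw [hδdef]
    field_simp
  calc (1:ℝ) ≤ M * Real.exp (4 * d * Real.sqrt (t * N) / ((N:ℝ) - t)) := hext
    _ = ε * a * Real.exp (b * d^2 / ((N:ℝ) - t) + 4 * d * Real.sqrt (t * N) / ((N:ℝ) - t)) := by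
        rw [hMdef, hbδ, Real.exp_add]
        ring
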